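/- Let V be a finite-dimensional complex vector space with conjugation σ, let K ⊆ E ⊆ V be complex subspaces with σ(K) = K, and let ε be an alternating ℂ-bilinear form on V with ε(k, x) = 0 for all k ∈ K and x ∈ E. Set L := L(E,ε). Then L ∩ σ̂(L) = K × {0} if and only if both of the following hold: (1) E + σ(E) = V; and (2) for every X ∈ (E ∩ σ(E)) \ K and every ξ ∈ V* with (X, ξ) ∈ L, one has (σ(X), conj ∘ ξ ∘ σ) ∉ L. -/

import Mathlib

variable {V : Type*} [AddCommGroup V] [Module ℂ V]

/-- The conjugate-transported linear functional `conj ∘ ξ ∘ σ`. -/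
noncomputable def conjDual (σ : V →ₛₗ[starRingEnd ℂ] V) (ξ : Module.Dual ℂ V) :
    Module.Dual ℂ V where
  toFun v := starRingEnd ℂ (ξ (σ v))
  map_add' u v := by simp
  map_smul' c v := by simp [LinearMap.map_smulₛₗ]

/-- The extension `σ̂` of a conjugation `σ` on `V` to `V × V*`, `σ̂(x, ξ) = (σx, conj ∘ ξ ∘ σ)`. -/
noncomputable def sigmaHat (σ : V →ₛₗ[starRingEnd ℂ] V) :
    V × Module.Dual ℂ V → V × Module.Dual ℂ V :=
  fun p => (σ p.1, conjDual σ p.2)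

/-- The (maximal isotropic) subspace `L(E, ε) ⊆ V × V*` attached to a subspace `E ⊆ V` and a
bilinear form `ε`. -/
def LSet (E : Submodule ℂ V) (ε : V → V → ℂ) : Set (V × Module.Dual ℂ V) :=
  {p | p.1 ∈ E ∧ ∀ y ∈ E, p.2 y = ε p.1 y}

lemma conjDual_apply (σ : V →ₛₗ[starRingEnd ℂ] V) (ξ : Module.Dual ℂ V) (v : V) :
    conjDual σ ξ v = starRingEnd ℂ (ξ (σ v)) := rfl

lemma conjDual_conjDual (σ : V →ₛₗ[starRingEnd ℂ] V) (hσinv : ∀ v, σ (σ v) = v)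
    (ξ : Module.Dual ℂ V) : conjDual σ (conjDual σ ξ) = ξ := by
  ext v; simp [conjDual_apply, hσinv]

lemma sigmaHat_sigmaHat (σ : V →ₛₗ[starRingEnd ℂ] V) (hσinv : ∀ v, σ (σ v) = v)
    (p : V × Module.Dual ℂ V) : sigmaHat σ (sigmaHat σ p) = p := by
  simp [sigmaHat, hσinv, conjDual_conjDual σ hσinv]

/-- `L ∩ σ̂(L) = K × {0}` iff `E + σ(E) = V` and for every
`X ∈ (E ∩ σ(E)) \ K` with `(X, ξ) ∈ L` one has `σ̂(X, ξ) ∉ L`. -/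
theorem lInterConjEqK_iff [FiniteDimensional ℂ V]
    (σ : V →ₛₗ[starRingEnd ℂ] V) (hσinv : ∀ v, σ (σ v) = v)
    (K E : Submodule ℂ V) (hKE : K ≤ E)
    (hσK : σ '' (K : Set V) = K)
    (ε : V →ₗ[ℂ] V →ₗ[ℂ] ℂ) (hεalt : ∀ x, ε x x = 0)
    (hεK : ∀ k ∈ K, ∀ x ∈ E, ε k x = 0) :
    LSet E (fun x y => ε x y) ∩ sigmaHat σ '' LSet E (fun x y => ε x y) =
        (K : Set V) ×ˢ ({0} : Set (Module.Dual ℂ V)) ↔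
      ((∀ v : V, ∃ a ∈ E, ∃ b ∈ E, v = a + σ b) ∧
        (∀ X : V, X ∈ (E : Set V) ∩ σ '' (E : Set V) → X ∉ K →
          ∀ ξ : Module.Dual ℂ V, (X, ξ) ∈ LSet E (fun x y => ε x y) →
            (σ X, conjDual σ ξ) ∉ LSet E (fun x y => ε x y))) := by
  have hσKmem : ∀ k ∈ K, σ k ∈ K := by
    intro k hk
    have : σ k ∈ σ '' (K : Set V) := Set.mem_image_of_mem σ hk
    rwa [hσK] at this
  constructor
  · intro h
    constructor
    · intro v
      by_contra hc
      push_neg at hc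
      set W : Submodule ℂ V := E ⊔ E.map σ with hW
      have hvW : v ∉ W := by
        intro hv
        rcases Submodule.mem_sup.mp hv with ⟨a, ha, b', hb', rfl⟩
        rcases Submodule.mem_map.mp hb' with ⟨b, hb, rfl⟩
        exact hc a ha b hb rfl
      obtain ⟨ξ, hξv, hξW⟩ := W.exists_dual_map_eq_bot_of_notMem hvW inferInstance
      have hξ0 : ∀ w ∈ W, ξ w = 0 := by
        intro w hw
        have : ξ w ∈ W.map ξ := Submodule.mem_map_of_mem hw
        simpa [hξW] using this
      have hmem : ((0 : V), ξ) ∈ LSet E (fun x y => ε x y) ∩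
          sigmaHat σ '' LSet E (fun x y => ε x y) := by
        constructor
        · exact ⟨E.zero_mem, fun y hy => by
            simp [hξ0 y (Submodule.mem_sup_left hy)]⟩
        · refine ⟨((0 : V), conjDual σ ξ), ⟨E.zero_mem, fun y hy => ?_⟩, ?_⟩
          · have : ξ (σ y) = 0 :=
              hξ0 _ (Submodule.mem_sup_right (Submodule.mem_map_of_mem hy))
            simp [conjDual_apply, this]
          · simp [sigmaHat, conjDual_conjDual σ hσinv]
      rw [h] at hmem
      have : ξ = 0 := hmem.2
      rw [this] at hξv
      simp at hξv
    · intro X hX hXK ξ hXξ hcon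
      have hmem : (X, ξ) ∈ LSet E (fun x y => ε x y) ∩
          sigmaHat σ '' LSet E (fun x y => ε x y) :=
        ⟨hXξ, ⟨(σ X, conjDual σ ξ), hcon, by exact sigmaHat_sigmaHat σ hσinv (X, ξ)⟩⟩
      rw [h] at hmem
      exact hXK hmem.1
  · rintro ⟨h1, h2⟩
    ext p
    constructor
    · rintro ⟨hpL, q, hqL, hq⟩
      have hσp : sigmaHat σ p ∈ LSet E (fun x y => ε x y) := by
        have : sigmaHat σ p = q := by
          rw [← hq, sigmaHat_sigmaHat σ hσinv]
        rw [this]; exact hqL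
      obtain ⟨hXE, hξ⟩ := hpL
      obtain ⟨hσXE, hξ'⟩ := hσp
      have hXσE : p.1 ∈ σ '' (E : Set V) :=
        ⟨σ p.1, hσXE, hσinv _⟩
      have hXK : p.1 ∈ K := by
        by_contra hXK
        exact h2 p.1 ⟨hXE, hXσE⟩ hXK p.2 ⟨hXE, hξ⟩ ⟨hσXE, hξ'⟩
      have hσXK : σ p.1 ∈ K := hσKmem _ hXK
      have hξ0 : p.2 = 0 := by
        ext v
        obtain ⟨a, ha, b, hb, rfl⟩ := h1 v
        have h1' : p.2 a = 0 := by rw [hξ a ha]; exact hεK _ hXK a ha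
        have h2' : p.2 (σ b) = 0 := by
          have := hξ' b hb
          simp only [sigmaHat, conjDual_apply] at this
          have h0 : (ε (σ p.1)) b = 0 := hεK _ hσXK b hb
          rw [h0] at this
          have : p.2 (σ b) = 0 := by
            have := congrArg (starRingEnd ℂ) this
            simpa using this
          exact this
        simp [h1', h2']
      exact ⟨hXK, by simp [hξ0]⟩
    · rintro ⟨hk, h0⟩
      simp only [Set.mem_singleton_iff] at h0
      have hpL : p ∈ LSet E (fun x y => ε x y) :=
        ⟨hKE hk, fun y hy => by rw [h0]; simp [(hεK _ hk y hy).symm]⟩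
      refine ⟨hpL, sigmaHat σ p, ⟨hKE (hσKmem _ hk), fun y hy => ?_⟩,
        sigmaHat_sigmaHat σ hσinv p⟩
      simp only [sigmaHat, conjDual_apply, h0]
      simp [hεK _ (hσKmem _ hk) y hy]
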